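/- Let H be a model graph, G a simple undirected graph with a partial labeling in which each label in {A,B,C,D} is assigned to at least one vertex, and v an unlabeled vertex. Let L be the set of all labels possible for v. If |L| ≥ 2, then L is not non-maximal: there is no L' ⊆ {A,B,C,D} with L ⊊ L', N_full(L) = N_full(L'), and N_dotted(L) = N_dotted(L'). -/

import Mathlib

inductive Label : Type
  | A | B | C | D
deriving DecidableEq

instance instFintypeLabel : Fintype Label where
  elems := {Label.A, Label.B, Label.C, Label.D}
  complete := by intro x; cases x <;> simp

/-- A model graph: an undirected graph on the four labels A,B,C,D, each edge
marked full or dotted (never both), symmetric and irreflexive. -/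
structure ModelGraph : Type where
  full : Label → Label → Bool
  dotted : Label → Label → Bool
  full_symm : ∀ p q, full p q = full q p
  dotted_symm : ∀ p q, dotted p q = dotted q p
  full_irrefl : ∀ p, full p p = false
  dotted_irrefl : ∀ p, dotted p p = false
  not_both : ∀ p q, ¬ (full p q = true ∧ dotted p q = true)

/-- `ℓ` is an `H`-partition of `G`: all four classes nonempty, full edges of `H`
force complete adjacency, dotted edges force complete nonadjacency. -/
def IsHPartition {V : Type} (G : SimpleGraph V) (H : ModelGraph) (ℓ : V → Label) : Prop :=
  (∀ p : Label, ∃ v, ℓ v = p) ∧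
  (∀ u v, H.full (ℓ u) (ℓ v) = true → G.Adj u v) ∧
  (∀ u v, H.dotted (ℓ u) (ℓ v) = true → ¬ G.Adj u v)

/-- Label `p` is possible for vertex `v` relative to the partial labeling `pl`. -/
def Possible {V : Type} (G : SimpleGraph V) (H : ModelGraph)
    (pl : V → Option Label) (v : V) (p : Label) : Prop :=
  (∀ q y, H.full p q = true → pl y = some q → G.Adj v y) ∧
  (∀ q y, H.dotted p q = true → pl y = some q → ¬ G.Adj v y)

/-- Full-edge neighborhood of a set of labels. -/
def NFull (H : ModelGraph) (L : Finset Label) : Finset Label :=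
  Finset.univ.filter (fun q => ∃ p ∈ L, H.full p q = true)

/-- Dotted-edge neighborhood of a set of labels. -/
def NDotted (H : ModelGraph) (L : Finset Label) : Finset Label :=
  Finset.univ.filter (fun q => ∃ p ∈ L, H.dotted p q = true)

/-- Class sizes `a,b,c,d` as a function of the label. -/
def cnt (a b c d : ℕ) : Label → ℕ
  | .A => a | .B => b | .C => c | .D => d

/-- the set L of all possible labels for an unlabeled vertex v
(with |L| ≥ 2, every label used in the partial labeling) is not non-maximal. -/
theorem stmt_1 {V : Type} (G : SimpleGraph V) (H : ModelGraph)
    (pl : V → Option Label) (hbase : ∀ p : Label, ∃ y, pl y = some p)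
    (v : V) (hv : pl v = none) (L : Finset Label)
    (hL : ∀ p : Label, p ∈ L ↔ Possible G H pl v p)
    (hcard : 2 ≤ L.card) :
    ¬ ∃ L' : Finset Label, L ⊂ L' ∧ NFull H L = NFull H L' ∧ NDotted H L = NDotted H L' := by
  rintro ⟨L', hss, hf, hd⟩
  obtain ⟨p', hp'L', hp'L⟩ := Finset.exists_of_ssubset hss
  have hnp : ¬ Possible G H pl v p' := fun h => hp'L ((hL p').mpr h)
  rw [Possible, not_and_or] at hnp
  rcases hnp with h | h
  · push_neg at h
    obtain ⟨q, y, hfull, hy, hnadj⟩ := h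
    have hq : q ∈ NFull H L' := by
      simp only [NFull, Finset.mem_filter, Finset.mem_univ, true_and]
      exact ⟨p', hp'L', hfull⟩
    rw [← hf] at hq
    simp only [NFull, Finset.mem_filter, Finset.mem_univ, true_and] at hq
    obtain ⟨p, hpL, hpq⟩ := hq
    exact hnadj (((hL p).mp hpL).1 q y hpq hy)
  · push_neg at h
    obtain ⟨q, y, hdot, hy, hadj⟩ := h
    have hq : q ∈ NDotted H L' := by
      simp only [NDotted, Finset.mem_filter, Finset.mem_univ, true_and]
      exact ⟨p', hp'L', hdot⟩
    rw [← hd] at hq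
    simp only [NDotted, Finset.mem_filter, Finset.mem_univ, true_and] at hq
    obtain ⟨p, hpL, hpq⟩ := hq
    exact ((hL p).mp hpL).2 q y hpq hy hadj
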